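/- Let λ > 0 and let s ∈ ℂ with Re(s) > 2. Then ∫_{{x ≥ 0, y ≥ 0, x+y < λ}} min(x,y)^{s−2} dx dy + ∫_{{x ≥ 0, y ≥ 0, x+y ≥ λ}} ( min(x,y)^{s−2} − min(x, y, x+y−λ)^{s−2} ) dx dy = λ^s / (s(s−1)), where both integrals (with respect to two-dimensional Lebesgue measure) converge absolutely and powers of nonnegative reals are complex powers. -/

import Mathlib

open MeasureTheory Set intervalIntegral

section aux

variable (l : ℝ) (s : ℂ)

noncomputable def fc (s : ℂ) : ℝ → ℂ := fun x => (x : ℂ) ^ (s - 2)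

noncomputable def f1 (s : ℂ) : ℝ × ℝ → ℂ := fun p => fc s (min p.1 p.2)

noncomputable def f2 (l : ℝ) (s : ℂ) : ℝ × ℝ → ℂ :=
  fun p => fc s (min p.1 p.2) - fc s (min (min p.1 p.2) (p.1 + p.2 - l))

def SA (l : ℝ) : Set (ℝ × ℝ) := {p : ℝ × ℝ | 0 ≤ p.1 ∧ 0 ≤ p.2 ∧ p.1 + p.2 < l}
def SB (l : ℝ) : Set (ℝ × ℝ) := {p : ℝ × ℝ | 0 ≤ p.1 ∧ 0 ≤ p.2 ∧ l ≤ p.1 + p.2}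

lemma hre (hs : 2 < s.re) : 0 < (s - 2).re := by
  have : (s - 2).re = s.re - 2 := by simp [Complex.sub_re]
  rw [this]; linarith

lemma fc_cont (hs : 2 < s.re) : Continuous (fc s) :=
  Complex.continuous_ofReal_cpow_const (hre s hs)

lemma f1_cont (hs : 2 < s.re) : Continuous (f1 s) :=
  (fc_cont s hs).comp ((continuous_fst).min (continuous_snd))

lemma f2_cont (hs : 2 < s.re) : Continuous (f2 l s) := by
  refine ((f1_cont s hs)).sub ?_
  exact (fc_cont s hs).comp (((continuous_fst).min (continuous_snd)).min
    ((continuous_fst.add continuous_snd).sub continuous_const))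

lemma measSA : MeasurableSet (SA l) := by
  apply MeasurableSet.inter
  · exact measurableSet_le measurable_const measurable_fst
  apply MeasurableSet.inter
  · exact measurableSet_le measurable_const measurable_snd
  · exact measurableSet_lt (measurable_fst.add measurable_snd) measurable_const

lemma measSB : MeasurableSet (SB l) := by
  apply MeasurableSet.inter
  · exact measurableSet_le measurable_const measurable_fst
  apply MeasurableSet.inter
  · exact measurableSet_le measurable_const measurable_snd
  · exact measurableSet_le measurable_const (measurable_fst.add measurable_snd)

lemma f2_zero_outside (hl : 0 < l) {p : ℝ × ℝ} (hp : p ∈ SB l)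
    (hK : p ∉ Icc (0:ℝ) l ×ˢ Icc (0:ℝ) l) : f2 l s p = 0 := by
  obtain ⟨hx, hy, hxy⟩ := hp
  have h : min (min p.1 p.2) (p.1 + p.2 - l) = min p.1 p.2 := by
    rw [min_eq_left_iff]
    simp only [mem_prod, mem_Icc, not_and_or, not_le] at hK
    rcases hK with (h | h) | (h | h)
    · linarith
    · calc min p.1 p.2 ≤ p.2 := min_le_right _ _
        _ ≤ p.1 + p.2 - l := by linarith
    · linarith
    · calc min p.1 p.2 ≤ p.1 := min_le_left _ _
        _ ≤ p.1 + p.2 - l := by linarith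
  simp [f2, h]

lemma intA (hs : 2 < s.re) (hl : 0 < l) : IntegrableOn (f1 s) (SA l) volume := by
  have hK : IsCompact (Icc (0:ℝ) l ×ˢ Icc (0:ℝ) l) := isCompact_Icc.prod isCompact_Icc
  have h1 : IntegrableOn (f1 s) (Icc (0:ℝ) l ×ˢ Icc (0:ℝ) l) volume :=
    (f1_cont s hs).continuousOn.integrableOn_compact hK
  refine h1.mono_set ?_
  rintro ⟨x, y⟩ ⟨hx, hy, hxy⟩
  exact ⟨⟨hx, by linarith⟩, ⟨hy, by linarith⟩⟩

lemma intB (hs : 2 < s.re) (hl : 0 < l) : IntegrableOn (f2 l s) (SB l) volume := by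
  have hK : IsCompact (Icc (0:ℝ) l ×ˢ Icc (0:ℝ) l) := isCompact_Icc.prod isCompact_Icc
  have h1 : IntegrableOn (f2 l s) (SB l ∩ Icc (0:ℝ) l ×ˢ Icc (0:ℝ) l) volume :=
    (((f2_cont l s hs)).continuousOn.integrableOn_compact hK).mono_set
      inter_subset_right
  have h2 : IntegrableOn (f2 l s) (SB l \ Icc (0:ℝ) l ×ˢ Icc (0:ℝ) l) volume := by
    refine (integrableOn_zero (ε' := ℂ)).congr_fun ?_ ?_
    · intro p hp
      exact (f2_zero_outside l s hl hp.1 hp.2).symm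
    · exact (measSB l).diff (measurableSet_Icc.prod measurableSet_Icc)
  have := h1.union h2
  rwa [inter_union_diff] at this



lemma s_ne (hs : 2 < s.re) : s ≠ 0 ∧ s - 1 ≠ 0 ∧ s - 2 ≠ 0 := by
  refine ⟨fun h => ?_, fun h => ?_, fun h => ?_⟩
  · rw [h] at hs; norm_num at hs
  · have h1 : s = 1 := by linear_combination h
    rw [h1] at hs; norm_num at hs
  · have h1 : s = 2 := by linear_combination h
    rw [h1] at hs; norm_num at hs
lemma inner_eq (hl : 0 < l) (hs : 2 < s.re) (x : ℝ) (hx : x ∈ Ioo 0 l) :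
    (∫ y : ℝ, ((SA l).indicator (f1 s) (x, y) + (SB l).indicator (f2 l s) (x, y))) =
      ((l : ℂ) - x) * (x : ℂ) ^ (s - 2) := by
  obtain ⟨hx0, hxl⟩ := hx
  obtain ⟨hs0, hs1, hs2⟩ := s_ne s hs
  have hfun : (fun y : ℝ => ((SA l).indicator (f1 s) (x, y) + (SB l).indicator (f2 l s) (x, y)))
      = fun y : ℝ => (Ico (0:ℝ) l).indicator (fun y => fc s (min x y)) y
          - (Ico (l - x) l).indicator (fun y => fc s (x + y - l)) y := by
    funext y
    by_cases h0 : 0 ≤ y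
    · by_cases h1 : x + y < l
      · rw [indicator_of_mem (show (x,y) ∈ SA l from ⟨hx0.le, h0, h1⟩),
            indicator_of_notMem (show (x,y) ∉ SB l by
              rintro ⟨-, -, h⟩; exact absurd h (not_le.2 h1)),
            indicator_of_mem (show y ∈ Ico (0:ℝ) l from ⟨h0, by linarith⟩),
            indicator_of_notMem (show y ∉ Ico (l - x) l by
              rintro ⟨h2, -⟩; linarith)]
        simp [f1]
      · push_neg at h1
        rw [indicator_of_notMem (show (x,y) ∉ SA l by
              rintro ⟨-, -, h⟩; exact absurd h (not_lt.2 h1)),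
            indicator_of_mem (show (x,y) ∈ SB l from ⟨hx0.le, h0, h1⟩)]
        by_cases h2 : y < l
        · have hmin : min (min x y) (x + y - l) = x + y - l :=
            min_eq_right (le_min (by linarith) (by linarith))
          rw [indicator_of_mem (show y ∈ Ico (0:ℝ) l from ⟨h0, h2⟩),
              indicator_of_mem (show y ∈ Ico (l - x) l from ⟨by linarith, h2⟩)]
          simp only [f2, f1, hmin]
          ring
        · push_neg at h2
          have hmin : min (min x y) (x + y - l) = min x y :=
            min_eq_left (by
              calc min x y ≤ x := min_le_left _ _
                _ ≤ x + y - l := by linarith)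
          rw [indicator_of_notMem (show y ∉ Ico (0:ℝ) l by
                rintro ⟨-, h⟩; exact absurd h (not_lt.2 h2)),
              indicator_of_notMem (show y ∉ Ico (l - x) l by
                rintro ⟨-, h⟩; exact absurd h (not_lt.2 h2))]
          simp [f2, hmin]
    · push_neg at h0
      rw [indicator_of_notMem (show (x,y) ∉ SA l by rintro ⟨-, h, -⟩; linarith),
          indicator_of_notMem (show (x,y) ∉ SB l by rintro ⟨-, h, -⟩; linarith),
          indicator_of_notMem (show y ∉ Ico (0:ℝ) l by rintro ⟨h, -⟩; linarith),
          indicator_of_notMem (show y ∉ Ico (l - x) l by rintro ⟨h, -⟩; linarith)]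
      simp
  rw [hfun]
  have hc1 : Continuous fun y : ℝ => fc s (min x y) :=
    (fc_cont s hs).comp (continuous_const.min continuous_id)
  have hc2 : Continuous fun y : ℝ => fc s (x + y - l) :=
    (fc_cont s hs).comp (((continuous_const.add continuous_id).sub continuous_const))
  have hi1 : Integrable ((Ico (0:ℝ) l).indicator fun y => fc s (min x y)) volume :=
    (integrable_indicator_iff measurableSet_Ico).2
      ((hc1.continuousOn.integrableOn_compact isCompact_Icc).mono_set Ico_subset_Icc_self)
  have hi2 : Integrable ((Ico (l - x) l).indicator fun y => fc s (x + y - l)) volume :=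
    (integrable_indicator_iff measurableSet_Ico).2
      ((hc2.continuousOn.integrableOn_compact isCompact_Icc).mono_set Ico_subset_Icc_self)
  rw [integral_sub hi1 hi2, MeasureTheory.integral_indicator measurableSet_Ico,
      MeasureTheory.integral_indicator measurableSet_Ico]
  have e1 : (∫ y in Ico (0:ℝ) l, fc s (min x y)) =
      (x : ℂ) ^ (s - 1) / (s - 1) + ((l : ℂ) - x) * (x : ℂ) ^ (s - 2) := by
    rw [integral_Ico_eq_integral_Ioo, ← integral_Ioc_eq_integral_Ioo,
        ← intervalIntegral.integral_of_le (by linarith : (0:ℝ) ≤ l),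
        ← intervalIntegral.integral_add_adjacent_intervals
          (hc1.intervalIntegrable 0 x) (hc1.intervalIntegrable x l)]
    have p1 : (∫ y in (0:ℝ)..x, fc s (min x y)) = (x : ℂ) ^ (s - 1) / (s - 1) := by
      rw [intervalIntegral.integral_congr (g := fc s) (fun y hy => by
        rw [uIcc_of_le hx0.le] at hy
        simp only [fc]
        rw [min_eq_right hy.2])]
      show (∫ y in (0:ℝ)..x, (y:ℂ) ^ (s-2)) = _
      rw [integral_cpow (Or.inl (by linarith [hre s hs] : (-1:ℝ) < (s-2).re))]
      rw [show s - 2 + 1 = s - 1 by ring, Complex.ofReal_zero, Complex.zero_cpow hs1]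
      simp
    have p2 : (∫ y in x..l, fc s (min x y)) = ((l : ℂ) - x) * (x : ℂ) ^ (s - 2) := by
      rw [intervalIntegral.integral_congr (g := fun _ => fc s x) (fun y hy => by
        rw [uIcc_of_le hxl.le] at hy
        simp only [fc]
        rw [min_eq_left hy.1])]
      rw [intervalIntegral.integral_const]
      simp only [fc]
      rw [Complex.real_smul]
      push_cast
      ring
    rw [p1, p2]
  have e2 : (∫ y in Ico (l - x) l, fc s (x + y - l)) = (x : ℂ) ^ (s - 1) / (s - 1) := by
    rw [integral_Ico_eq_integral_Ioo, ← integral_Ioc_eq_integral_Ioo,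
        ← intervalIntegral.integral_of_le (by linarith : l - x ≤ l)]
    have : (fun y : ℝ => fc s (x + y - l)) = fun y : ℝ => fc s (y + (x - l)) := by
      funext y; ring_nf
    rw [intervalIntegral.integral_congr (g := fun y => fc s (y + (x - l)))
        (fun y _ => by rw [show x + y - l = y + (x - l) by ring]),
      intervalIntegral.integral_comp_add_right (fc s) (x - l),
      show l - x + (x - l) = 0 by ring, show l + (x - l) = x by ring]
    show (∫ y in (0:ℝ)..x, (y:ℂ) ^ (s-2)) = _
    rw [integral_cpow (Or.inl (by linarith [hre s hs] : (-1:ℝ) < (s-2).re)),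
        show s - 2 + 1 = s - 1 by ring, Complex.ofReal_zero, Complex.zero_cpow hs1]
    simp
  rw [e1, e2]
  ring

lemma inner_zero (hl : 0 < l) (hs : 2 < s.re) (x : ℝ) (hx : x ∉ Ioo 0 l) (y : ℝ) :
    (SA l).indicator (f1 s) (x, y) + (SB l).indicator (f2 l s) (x, y) = 0 := by
  obtain ⟨hs0, hs1, hs2⟩ := s_ne s hs
  simp only [mem_Ioo, not_and_or, not_lt] at hx
  rcases hx with hx | hx
  · have hA : (SA l).indicator (f1 s) (x, y) = 0 := by
      by_cases h : (x, y) ∈ SA l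
      · obtain ⟨h1, h2, -⟩ := id h
        have hx0 : x = 0 := le_antisymm hx h1
        rw [indicator_of_mem h]
        have hm : min x y = x := min_eq_left (by rw [hx0]; exact h2)
        subst hx0
        simp [f1, fc, hm, Complex.zero_cpow hs2]
      · exact indicator_of_notMem h _
    have hB : (SB l).indicator (f2 l s) (x, y) = 0 := by
      by_cases h : (x, y) ∈ SB l
      · obtain ⟨h1, h2, h3⟩ := id h
        have hx0 : x = 0 := le_antisymm hx h1
        rw [indicator_of_mem h]
        have h2' : (0:ℝ) ≤ y := h2
        have h3' : l ≤ x + y := h3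
        have hm1 : min x y = x := min_eq_left (by rw [hx0]; exact h2)
        have hm2 : min (min x y) (x + y - l) = x := by
          rw [hm1]; exact min_eq_left (by linarith)
        simp only [f2]
        rw [hm2, hm1, sub_self]
      · exact indicator_of_notMem h _
    rw [hA, hB, add_zero]
  · have hA : (x, y) ∉ SA l := by
      rintro ⟨-, h2, h3⟩; linarith
    have hB : (SB l).indicator (f2 l s) (x, y) = 0 := by
      by_cases h : (x, y) ∈ SB l
      · obtain ⟨h1, h2, h3⟩ := id h
        have h2' : (0:ℝ) ≤ y := h2
        have hm : min (min x y) (x + y - l) = min x y :=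
          min_eq_left (by
            calc min x y ≤ y := min_le_right _ _
              _ ≤ x + y - l := by linarith)
        rw [indicator_of_mem h]
        simp only [f2]
        rw [hm, sub_self]
      · exact indicator_of_notMem h _
    rw [indicator_of_notMem hA, hB, add_zero]

lemma outer (hl : 0 < l) (hs : 2 < s.re) :
    (∫ x in Ioo (0:ℝ) l, ((l : ℂ) - x) * (x : ℂ) ^ (s - 2)) = (l : ℂ) ^ s / (s * (s - 1)) := by
  obtain ⟨hs0, hs1, hs2⟩ := s_ne s hs
  rw [← integral_Ioc_eq_integral_Ioo, ← intervalIntegral.integral_of_le hl.le]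
  have hcongr : (∫ x in (0:ℝ)..l, ((l : ℂ) - x) * (x : ℂ) ^ (s - 2)) =
      ∫ x in (0:ℝ)..l, ((l : ℂ) * (x : ℂ) ^ (s - 2) - (x : ℂ) ^ (s - 1)) := by
    refine intervalIntegral.integral_congr (fun x hx => ?_)
    rw [uIcc_of_le hl.le] at hx
    by_cases h : x = 0
    · simp [h, Complex.zero_cpow hs1, Complex.zero_cpow hs2]
    · have hxne : (x : ℂ) ≠ 0 := Complex.ofReal_ne_zero.2 h
      have : (x : ℂ) ^ (s - 1) = (x : ℂ) ^ (s - 2) * (x : ℂ) := by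
        rw [show s - 1 = s - 2 + 1 by ring, Complex.cpow_add _ _ hxne, Complex.cpow_one]
      rw [this]; ring
  rw [hcongr]
  have ii1 : IntervalIntegrable (fun x : ℝ => (l : ℂ) * (x : ℂ) ^ (s - 2)) volume 0 l :=
    (continuous_const.mul (Complex.continuous_ofReal_cpow_const (hre s hs))).intervalIntegrable 0 l
  have ii2 : IntervalIntegrable (fun x : ℝ => (x : ℂ) ^ (s - 1)) volume 0 l :=
    (Complex.continuous_ofReal_cpow_const (by
      have : (s - 1).re = s.re - 1 := by simp [Complex.sub_re]
      rw [this]; linarith)).intervalIntegrable 0 l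
  rw [intervalIntegral.integral_sub ii1 ii2, intervalIntegral.integral_const_mul,
      integral_cpow (Or.inl (by linarith [hre s hs] : (-1:ℝ) < (s-2).re)),
      integral_cpow (Or.inl (by
        have : (s - 1).re = s.re - 1 := by simp [Complex.sub_re]
        rw [this]; linarith))]
  rw [show s - 2 + 1 = s - 1 by ring, show s - 1 + 1 = s by ring,
      Complex.ofReal_zero, Complex.zero_cpow hs1, Complex.zero_cpow hs0]
  have hl0 : (l : ℂ) ≠ 0 := Complex.ofReal_ne_zero.2 hl.ne'
  have hls : (l : ℂ) * (l : ℂ) ^ (s - 1) = (l : ℂ) ^ s := by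
    rw [show s = 1 + (s - 1) by ring, Complex.cpow_add _ _ hl0, Complex.cpow_one,
        show 1 + (s - 1) - 1 = s - 1 by ring]
  rw [sub_zero, sub_zero]
  rw [← mul_div_assoc, hls]
  field_simp
  ring


end aux

theorem stmt2 (l : ℝ) (hl : 0 < l) (s : ℂ) (hs : 2 < s.re) :
    IntegrableOn (fun p : ℝ × ℝ => ((min p.1 p.2 : ℝ) : ℂ) ^ (s - 2))
        {p : ℝ × ℝ | 0 ≤ p.1 ∧ 0 ≤ p.2 ∧ p.1 + p.2 < l} volume ∧
    IntegrableOn (fun p : ℝ × ℝ =>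
        ((min p.1 p.2 : ℝ) : ℂ) ^ (s - 2)
          - ((min (min p.1 p.2) (p.1 + p.2 - l) : ℝ) : ℂ) ^ (s - 2))
        {p : ℝ × ℝ | 0 ≤ p.1 ∧ 0 ≤ p.2 ∧ l ≤ p.1 + p.2} volume ∧
    (∫ p in {p : ℝ × ℝ | 0 ≤ p.1 ∧ 0 ≤ p.2 ∧ p.1 + p.2 < l},
        ((min p.1 p.2 : ℝ) : ℂ) ^ (s - 2)) +
      (∫ p in {p : ℝ × ℝ | 0 ≤ p.1 ∧ 0 ≤ p.2 ∧ l ≤ p.1 + p.2},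
        (((min p.1 p.2 : ℝ) : ℂ) ^ (s - 2)
          - ((min (min p.1 p.2) (p.1 + p.2 - l) : ℝ) : ℂ) ^ (s - 2)))
      = (l : ℂ) ^ s / (s * (s - 1)) := by
  refine ⟨intA l s hs hl, intB l s hs hl, ?_⟩
  have hIA : Integrable ((SA l).indicator (f1 s)) volume :=
    (integrable_indicator_iff (measSA l)).2 (intA l s hs hl)
  have hIB : Integrable ((SB l).indicator (f2 l s)) volume :=
    (integrable_indicator_iff (measSB l)).2 (intB l s hs hl)
  have step1 : (∫ p in {p : ℝ × ℝ | 0 ≤ p.1 ∧ 0 ≤ p.2 ∧ p.1 + p.2 < l},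
        ((min p.1 p.2 : ℝ) : ℂ) ^ (s - 2)) +
      (∫ p in {p : ℝ × ℝ | 0 ≤ p.1 ∧ 0 ≤ p.2 ∧ l ≤ p.1 + p.2},
        (((min p.1 p.2 : ℝ) : ℂ) ^ (s - 2)
          - ((min (min p.1 p.2) (p.1 + p.2 - l) : ℝ) : ℂ) ^ (s - 2)))
      = ∫ p : ℝ × ℝ, ((SA l).indicator (f1 s) p + (SB l).indicator (f2 l s) p) := by
    rw [integral_add hIA hIB, MeasureTheory.integral_indicator (measSA l),
        MeasureTheory.integral_indicator (measSB l)]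
    rfl
  rw [step1]
  have hprod : Integrable (fun p : ℝ × ℝ =>
      (SA l).indicator (f1 s) p + (SB l).indicator (f2 l s) p) (volume.prod volume) := by
    rw [← Measure.volume_eq_prod]
    exact hIA.add hIB
  have step2 := MeasureTheory.integral_prod _ hprod
  rw [Measure.volume_eq_prod, step2]
  have key : (fun x : ℝ => ∫ y : ℝ, ((SA l).indicator (f1 s) (x, y)
        + (SB l).indicator (f2 l s) (x, y)))
      = fun x : ℝ => (Ioo (0:ℝ) l).indicator
          (fun x : ℝ => ((l : ℂ) - x) * (x : ℂ) ^ (s - 2)) x := by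
    funext x
    by_cases hx : x ∈ Ioo (0:ℝ) l
    · rw [indicator_of_mem hx]
      exact inner_eq l s hl hs x hx
    · rw [indicator_of_notMem hx]
      have : (fun y : ℝ => ((SA l).indicator (f1 s) (x, y)
          + (SB l).indicator (f2 l s) (x, y))) = fun _ => (0:ℂ) :=
        funext (inner_zero l s hl hs x hx)
      rw [this, integral_zero]
  rw [key, MeasureTheory.integral_indicator measurableSet_Ioo]
  exact outer l s hl hs
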